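/- arXiv:1503.03453 — 2 statements merged into one kernel-verified Lean document; each statement's English description precedes it below -/
import Mathlib

section
/- Let X₁, ..., Xₙ (n ≥ 2) be i.i.d. lognormal with parameters μ and σ². Define Kₙ = (Aₙ/Hₙ) - 1 where Aₙ = (1/n)∑ᵢ Xᵢ and Hₙ = n/∑ᵢ(1/Xᵢ). Then E[Kₙ] = ((n-1)/n)·(exp(σ²) - 1). -/
open MeasureTheory ProbabilityTheory Real NNReal
open scoped ENNReal

lemma gauss_key (t μ : ℝ) {v : ℝ≥0} (hv : v ≠ 0) (x : ℝ) :
    rexp (t * x) * gaussianPDFReal μ v x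
      = rexp (t * μ + v * t ^ 2 / 2) * gaussianPDFReal (μ + t * v) v x := by
  have hv' : (v : ℝ) ≠ 0 := by exact_mod_cast hv
  simp only [gaussianPDFReal]
  rw [mul_left_comm, ← Real.exp_add, mul_left_comm, ← Real.exp_add]
  congr 2
  field_simp
  ring

lemma integrable_exp_mul_gaussianReal (t μ : ℝ) {v : ℝ≥0} (hv : v ≠ 0) :
    Integrable (fun x => rexp (t * x)) (gaussianReal μ v) := by
  rw [gaussianReal_of_var_ne_zero _ hv]
  have hmeas : Measurable fun x => (gaussianPDFReal μ v x).toNNReal :=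
    (measurable_gaussianPDFReal μ v).real_toNNReal
  have hd : gaussianPDF μ v = fun x => ((gaussianPDFReal μ v x).toNNReal : ℝ≥0∞) := rfl
  rw [hd, integrable_withDensity_iff_integrable_smul hmeas]
  have : (fun x => ((gaussianPDFReal μ v x).toNNReal : ℝ≥0) • rexp (t * x))
      = fun x => rexp (t * μ + v * t ^ 2 / 2) * gaussianPDFReal (μ + t * v) v x := by
    ext x
    rw [NNReal.smul_def, smul_eq_mul, Real.coe_toNNReal _ (gaussianPDFReal_nonneg μ v x), mul_comm]
    exact gauss_key t μ hv x
  rw [this]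
  exact (integrable_gaussianPDFReal _ _).const_mul _

lemma integral_exp_mul_gaussianReal (t μ : ℝ) {v : ℝ≥0} (hv : v ≠ 0) :
    ∫ x, rexp (t * x) ∂(gaussianReal μ v) = rexp (t * μ + v * t ^ 2 / 2) := by
  rw [gaussianReal_of_var_ne_zero _ hv]
  have hmeas : Measurable fun x => (gaussianPDFReal μ v x).toNNReal :=
    (measurable_gaussianPDFReal μ v).real_toNNReal
  have hd : gaussianPDF μ v = fun x => ((gaussianPDFReal μ v x).toNNReal : ℝ≥0∞) := rfl
  rw [hd, integral_withDensity_eq_integral_smul hmeas]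
  have : (fun x => ((gaussianPDFReal μ v x).toNNReal : ℝ≥0) • rexp (t * x))
      = fun x => rexp (t * μ + v * t ^ 2 / 2) * gaussianPDFReal (μ + t * v) v x := by
    ext x
    rw [NNReal.smul_def, smul_eq_mul, Real.coe_toNNReal _ (gaussianPDFReal_nonneg μ v x), mul_comm]
    exact gauss_key t μ hv x
  rw [this, integral_const_mul, integral_gaussianPDFReal_eq_one _ hv, mul_one]

/-- Let `X i = exp (Y i)`, `i = 1, ..., n`, `n ≥ 2`, be i.i.d. lognormal with
parameters `μ, σ²`. With `Aₙ` the sample arithmetic mean and `Hₙ` the sample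
harmonic mean, the sample relative ratio `Kₙ = Aₙ/Hₙ - 1` satisfies
`E[Kₙ] = ((n-1)/n)·(exp σ² - 1)`. -/
theorem lognormal_Kn_mean {Ω : Type*} [MeasureSpace Ω]
    [IsProbabilityMeasure (ℙ : Measure Ω)]
    (n : ℕ) (hn : 2 ≤ n) (μ : ℝ) (v : ℝ≥0) (hv : v ≠ 0)
    (Y : Fin n → Ω → ℝ) (hm : ∀ i, Measurable (Y i))
    (hdist : ∀ i, Measure.map (Y i) ℙ = gaussianReal μ v)
    (hind : iIndepFun Y ℙ) :
    ∫ ω, ((∑ i, Real.exp (Y i ω)) / n) / ((n : ℝ) / ∑ i, (Real.exp (Y i ω))⁻¹) - 1 ∂ℙ =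
      ((n : ℝ) - 1) / n * (Real.exp (v : ℝ) - 1) := by
  have hn0 : (n : ℝ) ≠ 0 := by positivity
  set g : Fin n → Fin n → Ω → ℝ := fun i j ω => rexp (Y i ω) * (rexp (Y j ω))⁻¹ with hg
  -- integrability and integral of exp(t * Y i)
  have hmt : ∀ t : ℝ, Measurable fun x : ℝ => rexp (t * x) :=
    fun t => (measurable_id.const_mul t).exp
  have hInt : ∀ (t : ℝ) i, Integrable (fun ω => rexp (t * Y i ω)) ℙ := by
    intro t i
    have h1 := integrable_exp_mul_gaussianReal t μ hv
    rw [← hdist i] at h1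
    exact (integrable_map_measure (hmt t).aestronglyMeasurable (hm i).aemeasurable).mp h1
  have hI : ∀ (t : ℝ) i, ∫ ω, rexp (t * Y i ω) ∂ℙ = rexp (t * μ + v * t ^ 2 / 2) := by
    intro t i
    rw [← integral_exp_mul_gaussianReal t μ hv, ← hdist i,
      integral_map (hm i).aemeasurable (hmt t).aestronglyMeasurable]
  have hexp1 : ∀ i, (fun ω => rexp (Y i ω)) = fun ω => rexp (1 * Y i ω) := by
    intro i; ext ω; rw [one_mul]
  have hexpn : ∀ j, (fun ω => (rexp (Y j ω))⁻¹) = fun ω => rexp ((-1) * Y j ω) := by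
    intro j; ext ω; rw [← Real.exp_neg, neg_one_mul]
  -- independence of the transformed variables
  have hindep : ∀ i j, i ≠ j →
      IndepFun (fun ω => rexp (Y i ω)) (fun ω => (rexp (Y j ω))⁻¹) ℙ := by
    intro i j hij
    have := (hind.indepFun hij).comp Real.measurable_exp (Real.measurable_exp.comp measurable_neg)
    convert this using 1
    all_goals ext ω
    all_goals simp [Function.comp, Real.exp_neg]
  -- integrability of each product
  have hgi : ∀ i j, Integrable (g i j) ℙ := by
    intro i j
    by_cases hij : i = j
    · subst hij
      have : g i i = fun _ => (1 : ℝ) := by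
        ext ω; exact mul_inv_cancel₀ (Real.exp_ne_zero _)
      rw [this]; exact integrable_const 1
    · refine (hindep i j hij).integrable_mul ?_ ?_
      · rw [hexp1 i]; exact hInt 1 i
      · rw [hexpn j]; exact hInt (-1) j
  -- integral of each product
  have hgint : ∀ i j, ∫ ω, g i j ω ∂ℙ = if i = j then 1 else rexp v := by
    intro i j
    by_cases hij : i = j
    · subst hij
      simp only [if_pos rfl]
      have : g i i = fun _ => (1 : ℝ) := by
        ext ω; exact mul_inv_cancel₀ (Real.exp_ne_zero _)
      rw [this, integral_const]; simp
    · rw [if_neg hij]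
      have h1 : Integrable (fun ω => rexp (Y i ω)) ℙ := by rw [hexp1 i]; exact hInt 1 i
      have h2 : Integrable (fun ω => (rexp (Y j ω))⁻¹) ℙ := by rw [hexpn j]; exact hInt (-1) j
      calc ∫ ω, g i j ω ∂ℙ
          = (∫ ω, rexp (Y i ω) ∂ℙ) * ∫ ω, (rexp (Y j ω))⁻¹ ∂ℙ :=
            (hindep i j hij).integral_fun_mul_eq_mul_integral h1.aestronglyMeasurable h2.aestronglyMeasurable
        _ = rexp v := by
            rw [hexp1 i, hexpn j, hI 1 i, hI (-1) j, ← Real.exp_add]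
            congr 1
            ring
  -- rewrite the integrand
  have hfun : (fun ω => ((∑ i, rexp (Y i ω)) / n) / ((n : ℝ) / ∑ i, (rexp (Y i ω))⁻¹) - 1)
      = fun ω => (∑ i, ∑ j, g i j ω) / ((n : ℝ) * n) - 1 := by
    ext ω
    rw [div_eq_mul_inv ((∑ i, rexp (Y i ω)) / n), inv_div, div_mul_div_comm,
      Finset.sum_mul_sum]
  rw [hfun]
  have hS : Integrable (fun ω => ∑ i, ∑ j, g i j ω) ℙ :=
    integrable_finset_sum _ fun i _ => integrable_finset_sum _ fun j _ => hgi i j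
  rw [integral_sub (hS.div_const _) (integrable_const 1), integral_div, integral_const]
  have hI2 : ∫ ω, ∑ i, ∑ j, g i j ω ∂ℙ = ∑ i : Fin n, ∑ j : Fin n, (if i = j then (1:ℝ) else rexp v) := by
    rw [integral_finset_sum _ fun i _ => integrable_finset_sum _ fun j _ => hgi i j]
    refine Finset.sum_congr rfl fun i _ => ?_
    rw [integral_finset_sum _ fun j _ => hgi i j]
    exact Finset.sum_congr rfl fun j _ => hgint i j
  rw [hI2]
  have hrow : ∀ i : Fin n, ∑ j : Fin n, (if i = j then (1:ℝ) else rexp v)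
      = n * rexp v + (1 - rexp v) := by
    intro i
    have h : ∀ j : Fin n, (if i = j then (1:ℝ) else rexp v)
        = rexp v + (if i = j then 1 - rexp v else 0) := by
      intro j; split <;> ring
    simp_rw [h]
    rw [Finset.sum_add_distrib, Finset.sum_const, Finset.sum_ite_eq]
    simp [Finset.card_univ]
  simp_rw [hrow]
  rw [Finset.sum_const, Finset.card_univ, Fintype.card_fin]
  simp only [nsmul_eq_mul, smul_eq_mul, measure_univ, ENNReal.toReal_one, probReal_univ, one_mul]
  field_simp
  ring
end

section
/- Let X₁, ..., Xₙ (n ≥ 2) be i.i.d. lognormal with parameters μ and σ², and let k = exp(σ²) - 1. The estimator k̂ₙ := (n/(n-1))·((Aₙ/Hₙ) - 1), with Aₙ and Hₙ the sample arithmetic and harmonic means, is unbiased: E[k̂ₙ] = k. -/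
open MeasureTheory ProbabilityTheory Real NNReal
open scoped ENNReal

lemma exp_mul_gaussianPDFReal (μ : ℝ) {v : ℝ≥0} (hv : v ≠ 0) (t x : ℝ) :
    rexp (t * x) * gaussianPDFReal μ v x
      = rexp (μ * t + v * t ^ 2 / 2) * gaussianPDFReal (μ + t * v) v x := by
  have hv' : (v : ℝ) ≠ 0 := NNReal.coe_ne_zero.mpr hv
  simp only [gaussianPDFReal]
  rw [mul_left_comm, mul_left_comm (rexp _), ← Real.exp_add, ← Real.exp_add]
  congr 2
  field_simp
  ring

lemma integrable_exp_gaussianReal (μ : ℝ) {v : ℝ≥0} (hv : v ≠ 0) (t : ℝ) :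
    Integrable (fun x => rexp (t * x)) (gaussianReal μ v) := by
  rw [gaussianReal_of_var_ne_zero _ hv]
  have hmeas : Measurable fun x => (gaussianPDFReal μ v x).toNNReal :=
    (measurable_gaussianPDFReal μ v).real_toNNReal
  have hdens : gaussianPDF μ v = fun x => (↑(gaussianPDFReal μ v x).toNNReal : ℝ≥0∞) := rfl
  rw [hdens, integrable_withDensity_iff_integrable_smul hmeas]
  have : (fun x => (gaussianPDFReal μ v x).toNNReal • rexp (t * x))
      = fun x => rexp (μ * t + v * t ^ 2 / 2) * gaussianPDFReal (μ + t * v) v x := by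
    ext x
    rw [NNReal.smul_def, smul_eq_mul, Real.coe_toNNReal _ (gaussianPDFReal_nonneg _ _ _),
      mul_comm, exp_mul_gaussianPDFReal μ hv t x]
  rw [this]
  exact (integrable_gaussianPDFReal _ _).const_mul _

lemma integral_exp_gaussianReal (μ : ℝ) {v : ℝ≥0} (hv : v ≠ 0) (t : ℝ) :
    ∫ x, rexp (t * x) ∂(gaussianReal μ v) = rexp (μ * t + v * t ^ 2 / 2) := by
  rw [gaussianReal_of_var_ne_zero _ hv]
  have hmeas : Measurable fun x => (gaussianPDFReal μ v x).toNNReal :=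
    (measurable_gaussianPDFReal μ v).real_toNNReal
  have hdens : gaussianPDF μ v = fun x => (↑(gaussianPDFReal μ v x).toNNReal : ℝ≥0∞) := rfl
  rw [hdens, integral_withDensity_eq_integral_smul hmeas]
  have : (fun x => (gaussianPDFReal μ v x).toNNReal • rexp (t * x))
      = fun x => rexp (μ * t + v * t ^ 2 / 2) * gaussianPDFReal (μ + t * v) v x := by
    ext x
    rw [NNReal.smul_def, smul_eq_mul, Real.coe_toNNReal _ (gaussianPDFReal_nonneg _ _ _),
      mul_comm, exp_mul_gaussianPDFReal μ hv t x]
  rw [this, integral_const_mul, integral_gaussianPDFReal_eq_one _ hv, mul_one]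

lemma integrable_exp_mul_rv {Ω : Type*} [MeasureSpace Ω] {Y : Ω → ℝ} (hm : Measurable Y)
    {μ : ℝ} {v : ℝ≥0} (hv : v ≠ 0) (hd : Measure.map Y ℙ = gaussianReal μ v) (t : ℝ) :
    Integrable (fun ω => rexp (t * Y ω)) ℙ := by
  have h := integrable_exp_gaussianReal μ hv t
  rw [← hd] at h
  exact (integrable_map_measure (measurable_const_mul t).exp.aestronglyMeasurable
    hm.aemeasurable).mp h

lemma integral_exp_mul_rv {Ω : Type*} [MeasureSpace Ω] {Y : Ω → ℝ} (hm : Measurable Y)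
    {μ : ℝ} {v : ℝ≥0} (hv : v ≠ 0) (hd : Measure.map Y ℙ = gaussianReal μ v) (t : ℝ) :
    ∫ ω, rexp (t * Y ω) ∂ℙ = rexp (μ * t + v * t ^ 2 / 2) := by
  rw [← integral_exp_gaussianReal μ hv t, ← hd,
    integral_map hm.aemeasurable (measurable_const_mul t).exp.aestronglyMeasurable]

/-- Let `X i = exp (Y i)`, `i = 1, ..., n`, `n ≥ 2`, be i.i.d. lognormal with
parameters `μ, σ²`, and `k = exp σ² - 1`. The estimator
`k̂ₙ = (n/(n-1))·(Aₙ/Hₙ - 1)` is unbiased: `E[k̂ₙ] = k`. -/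
theorem lognormal_khat_unbiased {Ω : Type*} [MeasureSpace Ω]
    [IsProbabilityMeasure (ℙ : Measure Ω)]
    (n : ℕ) (hn : 2 ≤ n) (μ : ℝ) (v : ℝ≥0) (hv : v ≠ 0)
    (Y : Fin n → Ω → ℝ) (hm : ∀ i, Measurable (Y i))
    (hdist : ∀ i, Measure.map (Y i) ℙ = gaussianReal μ v)
    (hind : iIndepFun Y ℙ) :
    ∫ ω, (n : ℝ) / ((n : ℝ) - 1) *
        (((∑ i, Real.exp (Y i ω)) / n) / ((n : ℝ) / ∑ i, (Real.exp (Y i ω))⁻¹) - 1) ∂ℙ =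
      Real.exp (v : ℝ) - 1 := by
  haveI : Nonempty (Fin n) := ⟨⟨0, by omega⟩⟩
  have hn2 : (2 : ℝ) ≤ (n : ℝ) := by exact_mod_cast hn
  have hnn : (n : ℝ) ≠ 0 := by linarith
  have hn1 : (n : ℝ) - 1 ≠ 0 := by linarith
  set g : Fin n → Fin n → Ω → ℝ := fun i j ω => rexp (Y i ω) * (rexp (Y j ω))⁻¹ with hg
  -- independence via composition
  have hindep : ∀ i j, i ≠ j →
      IndepFun (fun ω => rexp (Y i ω)) (fun ω => (rexp (Y j ω))⁻¹) ℙ :=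
    fun i j hij => (hind.indepFun hij).comp measurable_exp measurable_exp.inv
  have hexp1 : ∀ i, Integrable (fun ω => rexp (Y i ω)) ℙ := by
    intro i
    have := integrable_exp_mul_rv (hm i) hv (hdist i) 1
    simpa using this
  have hexp2 : ∀ j, Integrable (fun ω => (rexp (Y j ω))⁻¹) ℙ := by
    intro j
    have := integrable_exp_mul_rv (hm j) hv (hdist j) (-1)
    simpa [Real.exp_neg, neg_mul] using this
  have hintg : ∀ i j, Integrable (g i j) ℙ := by
    intro i j
    by_cases hij : i = j
    · subst hij
      have : g i i = fun _ => (1 : ℝ) := by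
        funext ω; simp [hg, mul_inv_cancel₀ (Real.exp_ne_zero _)]
      rw [this]; exact integrable_const 1
    · exact (hindep i j hij).integrable_mul (hexp1 i) (hexp2 j)
  have hEg : ∀ i j, ∫ ω, g i j ω ∂ℙ = if i = j then 1 else rexp (v : ℝ) := by
    intro i j
    by_cases hij : i = j
    · subst hij
      simp only [if_pos rfl]
      have : g i i = fun _ => (1 : ℝ) := by
        funext ω; simp [hg, mul_inv_cancel₀ (Real.exp_ne_zero _)]
      rw [this]; simp
    · rw [if_neg hij]
      have hmul := (hindep i j hij).integral_fun_mul_eq_mul_integral (hexp1 i).aestronglyMeasurable (hexp2 j).aestronglyMeasurable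
      have h1 : ∫ ω, rexp (Y i ω) ∂ℙ = rexp (μ + v / 2) := by
        have := integral_exp_mul_rv (hm i) hv (hdist i) 1
        simpa using this
      have h2 : ∫ ω, (rexp (Y j ω))⁻¹ ∂ℙ = rexp (-μ + v / 2) := by
        have := integral_exp_mul_rv (hm j) hv (hdist j) (-1)
        simp only [neg_mul, one_mul, Real.exp_neg] at this ⊢
        rw [this]; ring_nf
      calc ∫ ω, g i j ω ∂ℙ = ∫ ω, (fun ω => rexp (Y i ω)) ω * (fun ω => (rexp (Y j ω))⁻¹) ω ∂ℙ := rfl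
        _ = (∫ ω, rexp (Y i ω) ∂ℙ) * ∫ ω, (rexp (Y j ω))⁻¹ ∂ℙ := hmul
        _ = rexp (v : ℝ) := by rw [h1, h2, ← Real.exp_add]; ring_nf
  -- rewrite the integrand
  have heq : ∀ ω, (n : ℝ) / ((n : ℝ) - 1) *
        (((∑ i, Real.exp (Y i ω)) / n) / ((n : ℝ) / ∑ i, (Real.exp (Y i ω))⁻¹) - 1)
      = (n : ℝ) / ((n : ℝ) - 1) / (n : ℝ) ^ 2 * ∑ i, ∑ j, g i j ω
        - (n : ℝ) / ((n : ℝ) - 1) := by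
    intro ω
    have hT : 0 < ∑ i, (Real.exp (Y i ω))⁻¹ :=
      Finset.sum_pos (fun i _ => by positivity) Finset.univ_nonempty
    have hsum : ∑ i, ∑ j, g i j ω
        = (∑ i, rexp (Y i ω)) * ∑ j, (rexp (Y j ω))⁻¹ := by
      rw [Finset.sum_mul_sum]
    rw [hsum]
    field_simp
  simp_rw [heq]
  have hint2 : ∀ i, Integrable (fun ω => ∑ j, g i j ω) ℙ :=
    fun i => integrable_finset_sum _ fun j _ => hintg i j
  have hint1 : Integrable (fun ω => ∑ i, ∑ j, g i j ω) ℙ :=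
    integrable_finset_sum _ fun i _ => hint2 i
  rw [integral_sub (hint1.const_mul _) (integrable_const _), integral_const_mul,
    integral_finset_sum _ (fun i _ => hint2 i)]
  have : ∀ i, ∫ ω, ∑ j, g i j ω ∂ℙ = ((n : ℝ) - 1) * rexp (v : ℝ) + 1 := by
    intro i
    rw [integral_finset_sum _ (fun j _ => hintg i j)]
    simp_rw [hEg i]
    have hsplit : ∀ j : Fin n, (if i = j then (1 : ℝ) else rexp (v : ℝ))
        = rexp (v : ℝ) + (if i = j then 1 - rexp (v : ℝ) else 0) := by
      intro j; split <;> ring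
    simp_rw [hsplit]
    rw [Finset.sum_add_distrib, Finset.sum_const, Finset.card_univ, Fintype.card_fin,
      Finset.sum_ite_eq Finset.univ i (fun _ => 1 - rexp (v : ℝ))]
    simp only [Finset.mem_univ, if_true, nsmul_eq_mul]
    ring
  simp_rw [this]
  rw [Finset.sum_const, Finset.card_univ, Fintype.card_fin]
  rw [integral_const]
  simp only [measure_univ, probReal_univ, ENNReal.toReal_one, smul_eq_mul, one_mul, nsmul_eq_mul]
  field_simp
  ring
end
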